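/- For the sigmoid ψ(u) = 1/(1+e^{-ρ(u-u₀)}) with ρ > 0 and any u^L < u₀, there exists a unique w > u₀ such that the line from (u^L, ψ(u^L)) through (w, ψ(w)) is tangent to ψ at w, i.e., ψ'(w)·(w - u^L) = ψ(w) - ψ(u^L). -/

import Mathlib

open Real Set Filter

noncomputable def sigE (ρ u₀ w : ℝ) : ℝ := Real.exp (-ρ * (w - u₀))
noncomputable def sigPsi (ρ u₀ w : ℝ) : ℝ := (1 + sigE ρ u₀ w)⁻¹
noncomputable def sigPhi (ρ u₀ w : ℝ) : ℝ := ρ * sigE ρ u₀ w / (1 + sigE ρ u₀ w) ^ 2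

lemma sigE_pos (ρ u₀ w : ℝ) : 0 < sigE ρ u₀ w := Real.exp_pos _
lemma one_add_sigE_pos (ρ u₀ w : ℝ) : 0 < 1 + sigE ρ u₀ w := by
  have := sigE_pos ρ u₀ w; linarith

lemma hasDerivAt_sigE (ρ u₀ w : ℝ) :
    HasDerivAt (fun u => Real.exp (-ρ * (u - u₀))) (-ρ * sigE ρ u₀ w) w := by
  have h1 : HasDerivAt (fun u : ℝ => -ρ * (u - u₀)) (-ρ) w := by
    simpa using ((hasDerivAt_id w).sub_const u₀).const_mul (-ρ)
  simpa [sigE, mul_comm] using h1.exp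

lemma hasDerivAt_sigPsi (ρ u₀ w : ℝ) :
    HasDerivAt (fun u : ℝ => (1 + Real.exp (-ρ * (u - u₀)))⁻¹) (sigPhi ρ u₀ w) w := by
  have h2 := ((hasDerivAt_sigE ρ u₀ w).const_add 1).inv (ne_of_gt (one_add_sigE_pos ρ u₀ w))
  refine h2.congr_deriv ?_
  simp only [sigPhi, sigE]
  ring

lemma hasDerivAt_sigPhi (ρ u₀ w : ℝ) :
    HasDerivAt (fun u : ℝ => ρ * Real.exp (-ρ * (u - u₀)) / (1 + Real.exp (-ρ * (u - u₀))) ^ 2)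
      (ρ ^ 2 * sigE ρ u₀ w * (sigE ρ u₀ w - 1) / (1 + sigE ρ u₀ w) ^ 3) w := by
  have hnum : HasDerivAt (fun u : ℝ => ρ * Real.exp (-ρ * (u - u₀)))
      (ρ * (-ρ * sigE ρ u₀ w)) w := (hasDerivAt_sigE ρ u₀ w).const_mul ρ
  have hden : HasDerivAt (fun u : ℝ => (1 + Real.exp (-ρ * (u - u₀))) ^ 2)
      (2 * (1 + sigE ρ u₀ w) ^ 1 * (-ρ * sigE ρ u₀ w)) w := by
    exact ((hasDerivAt_sigE ρ u₀ w).const_add 1).pow 2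
  have hd2 : ((1 + sigE ρ u₀ w) ^ 2 : ℝ) ≠ 0 := by
    have := one_add_sigE_pos ρ u₀ w; positivity
  have := hnum.div hden hd2
  have h0 : (1 + sigE ρ u₀ w : ℝ) ≠ 0 := ne_of_gt (one_add_sigE_pos ρ u₀ w)
  refine this.congr_deriv ?_
  simp only [sigE] at h0 ⊢
  field_simp
  ring

noncomputable def sigG (ρ u₀ uL w : ℝ) : ℝ :=
  sigPhi ρ u₀ w * (w - uL) - (sigPsi ρ u₀ w - sigPsi ρ u₀ uL)

lemma hasDerivAt_sigG (ρ u₀ uL w : ℝ) :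
    HasDerivAt (sigG ρ u₀ uL)
      (ρ ^ 2 * sigE ρ u₀ w * (sigE ρ u₀ w - 1) / (1 + sigE ρ u₀ w) ^ 3 * (w - uL)) w := by
  have h1 := (hasDerivAt_sigPhi ρ u₀ w).mul ((hasDerivAt_id w).sub_const uL)
  have h2 := (hasDerivAt_sigPsi ρ u₀ w).sub_const (sigPsi ρ u₀ uL)
  have h3 := h1.sub h2
  refine h3.congr_deriv ?_
  simp only [sigPhi, sigE, id_eq]
  ring

lemma sigG_cont (ρ u₀ uL : ℝ) : Continuous (sigG ρ u₀ uL) := by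
  rw [continuous_iff_continuousAt]
  exact fun w => (hasDerivAt_sigG ρ u₀ uL w).continuousAt

lemma sigG_strictAntiOn (ρ u₀ uL : ℝ) (hρ : 0 < ρ) (hL : uL < u₀) :
    StrictAntiOn (sigG ρ u₀ uL) (Set.Ici u₀) := by
  apply strictAntiOn_of_deriv_neg (convex_Ici u₀) (sigG_cont ρ u₀ uL).continuousOn
  intro w hw
  rw [interior_Ici] at hw
  rw [(hasDerivAt_sigG ρ u₀ uL w).deriv]
  have hE1 : sigE ρ u₀ w < 1 := by
    apply Real.exp_lt_one_iff.2  -- maybe name differs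
    nlinarith [mem_Ioi.mp hw]
  have hEp := sigE_pos ρ u₀ w
  have h3 : (0:ℝ) < (1 + sigE ρ u₀ w) ^ 3 := by positivity
  have hwL : 0 < w - uL := by have := mem_Ioi.mp hw; linarith
  apply mul_neg_of_neg_of_pos _ hwL
  apply div_neg_of_neg_of_pos _ h3
  have h4 : 0 < ρ ^ 2 * sigE ρ u₀ w * (1 - sigE ρ u₀ w) :=
    mul_pos (mul_pos (pow_pos hρ 2) hEp) (by linarith)
  nlinarith

lemma sigPhi_cont (ρ u₀ : ℝ) : Continuous (sigPhi ρ u₀) := by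
  rw [continuous_iff_continuousAt]
  intro w
  have h := (hasDerivAt_sigPhi ρ u₀ w).continuousAt
  have hfun : sigPhi ρ u₀ =
      fun u : ℝ => ρ * Real.exp (-ρ * (u - u₀)) / (1 + Real.exp (-ρ * (u - u₀))) ^ 2 := by
    funext u; simp [sigPhi, sigE]
  rw [hfun]; exact h

lemma sigPhi_strictMonoOn (ρ u₀ : ℝ) (hρ : 0 < ρ) :
    StrictMonoOn (sigPhi ρ u₀) (Set.Iic u₀) := by
  apply strictMonoOn_of_deriv_pos (convex_Iic u₀) (sigPhi_cont ρ u₀).continuousOn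
  intro w hw
  rw [interior_Iic] at hw
  have hd : deriv (sigPhi ρ u₀) w
      = ρ ^ 2 * sigE ρ u₀ w * (sigE ρ u₀ w - 1) / (1 + sigE ρ u₀ w) ^ 3 := by
    have hfun : sigPhi ρ u₀ =
        fun u : ℝ => ρ * Real.exp (-ρ * (u - u₀)) / (1 + Real.exp (-ρ * (u - u₀))) ^ 2 := by
      funext u; simp [sigPhi, sigE]
    rw [hfun, (hasDerivAt_sigPhi ρ u₀ w).deriv]
  rw [hd]
  have hE1 : 1 < sigE ρ u₀ w := by
    rw [sigE, ← Real.exp_zero]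
    apply Real.exp_lt_exp.2
    have hwu : w < u₀ := hw
    nlinarith
  have hEp := sigE_pos ρ u₀ w
  have h3 : (0:ℝ) < (1 + sigE ρ u₀ w) ^ 3 := by positivity
  apply div_pos _ h3
  exact mul_pos (mul_pos (pow_pos hρ 2) hEp) (sub_pos.2 hE1)

lemma sigG_pos_at (ρ u₀ uL : ℝ) (hρ : 0 < ρ) (hL : uL < u₀) : 0 < sigG ρ u₀ uL u₀ := by
  obtain ⟨c, hc, hslope⟩ := exists_hasDerivAt_eq_slope
    (fun u : ℝ => (1 + Real.exp (-ρ * (u - u₀)))⁻¹) (sigPhi ρ u₀) hL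
    (fun w _ => (hasDerivAt_sigPsi ρ u₀ w).continuousAt.continuousWithinAt)
    (fun w _ => hasDerivAt_sigPsi ρ u₀ w)
  have hcu : c < u₀ := hc.2
  have hmono := sigPhi_strictMonoOn ρ u₀ hρ (Set.mem_Iic.2 hcu.le) (Set.mem_Iic.2 le_rfl) hcu
  have hsub : (0:ℝ) < u₀ - uL := by linarith
  have hψ : sigPsi ρ u₀ u₀ - sigPsi ρ u₀ uL = sigPhi ρ u₀ c * (u₀ - uL) := by
    rw [eq_div_iff (by linarith : u₀ - uL ≠ 0)] at hslope
    simp only [sigPsi, sigE]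
    linarith [hslope]
  unfold sigG
  rw [hψ]
  have := mul_lt_mul_of_pos_right hmono hsub
  linarith

lemma sigE_tendsto (ρ u₀ : ℝ) (hρ : 0 < ρ) :
    Filter.Tendsto (sigE ρ u₀) Filter.atTop (nhds 0) := by
  apply Real.tendsto_exp_atBot.comp
  have h1 : Filter.Tendsto (fun w : ℝ => -ρ * w + ρ * u₀) Filter.atTop Filter.atBot :=
    Filter.tendsto_atBot_add_const_right _ _
      (Filter.tendsto_id.const_mul_atTop_of_neg (by linarith))
  exact h1.congr (by intro x; simp [sigE]; ring)

lemma sigG_tendsto (ρ u₀ uL : ℝ) (hρ : 0 < ρ) :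
    Filter.Tendsto (sigG ρ u₀ uL) Filter.atTop (nhds (sigPsi ρ u₀ uL - 1)) := by
  have hE := sigE_tendsto ρ u₀ hρ
  have hmain : Filter.Tendsto (fun w => (w - uL) * sigE ρ u₀ w) Filter.atTop (nhds 0) := by
    have hlin : Filter.Tendsto (fun w : ℝ => ρ * (w - u₀)) Filter.atTop Filter.atTop :=
      (Filter.tendsto_atTop_add_const_right _ _ Filter.tendsto_id).const_mul_atTop hρ
    have h1 : Filter.Tendsto (fun w : ℝ => (ρ * (w - u₀)) * sigE ρ u₀ w)
        Filter.atTop (nhds 0) := by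
      have := (Real.tendsto_pow_mul_exp_neg_atTop_nhds_zero 1).comp hlin
      refine this.congr fun w => ?_
      simp [sigE, Function.comp]
    have h2 : Filter.Tendsto (fun w : ℝ => (1/ρ) * ((ρ * (w - u₀)) * sigE ρ u₀ w)
        + (u₀ - uL) * sigE ρ u₀ w) Filter.atTop (nhds ((1/ρ) * 0 + (u₀ - uL) * 0)) :=
      ((h1.const_mul _).add (hE.const_mul _))
    have h2' := h2
    rw [show (1/ρ) * 0 + (u₀ - uL) * (0:ℝ) = 0 by ring] at h2'
    refine h2'.congr fun w => ?_
    have : ρ ≠ 0 := ne_of_gt hρ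
    field_simp
    ring
  have hfactor : Filter.Tendsto (fun w => ρ / (1 + sigE ρ u₀ w) ^ 2) Filter.atTop
      (nhds (ρ / (1 + 0) ^ 2)) := by
    apply Filter.Tendsto.div tendsto_const_nhds
    · exact ((hE.const_add 1).pow 2)
    · norm_num
  have hpsi : Filter.Tendsto (fun w => sigPsi ρ u₀ w) Filter.atTop (nhds 1) := by
    have := (hE.const_add 1).inv₀ (by norm_num)
    simpa [sigPsi] using this
  have hprod : Filter.Tendsto (fun w => (ρ / (1 + sigE ρ u₀ w) ^ 2) * ((w - uL) * sigE ρ u₀ w))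
      Filter.atTop (nhds ((ρ / (1 + 0) ^ 2) * 0)) := hfactor.mul hmain
  rw [show (ρ / (1 + (0:ℝ)) ^ 2) * 0 = 0 by ring] at hprod
  have hG : Filter.Tendsto (fun w => (ρ / (1 + sigE ρ u₀ w) ^ 2) * ((w - uL) * sigE ρ u₀ w)
      - (sigPsi ρ u₀ w - sigPsi ρ u₀ uL)) Filter.atTop (nhds (0 - (1 - sigPsi ρ u₀ uL))) :=
    hprod.sub (hpsi.sub_const _)
  rw [show (0:ℝ) - (1 - sigPsi ρ u₀ uL) = sigPsi ρ u₀ uL - 1 by ring] at hG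
  refine hG.congr fun w => ?_
  simp only [sigG, sigPhi]
  ring

theorem sigmoid_tangent_point (ρ u₀ uL : ℝ) (hρ : 0 < ρ) (hL : uL < u₀) :
    ∃! w : ℝ, w ∈ Set.Ioi u₀ ∧
      deriv (fun u : ℝ => (1 + Real.exp (-ρ * (u - u₀)))⁻¹) w * (w - uL) =
        (1 + Real.exp (-ρ * (w - u₀)))⁻¹ - (1 + Real.exp (-ρ * (uL - u₀)))⁻¹ := by
  have hcond : ∀ w : ℝ, (deriv (fun u : ℝ => (1 + Real.exp (-ρ * (u - u₀)))⁻¹) w * (w - uL) =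
      (1 + Real.exp (-ρ * (w - u₀)))⁻¹ - (1 + Real.exp (-ρ * (uL - u₀)))⁻¹) ↔
      sigG ρ u₀ uL w = 0 := by
    intro w
    rw [(hasDerivAt_sigPsi ρ u₀ w).deriv]
    simp only [sigG, sigPhi, sigPsi, sigE]
    constructor <;> intro h <;> linarith
  have hlim := sigG_tendsto ρ u₀ uL hρ
  have hneg : sigPsi ρ u₀ uL - 1 < 0 := by
    have hE := sigE_pos ρ u₀ uL
    have h1 : (1:ℝ) < 1 + sigE ρ u₀ uL := by linarith
    have : sigPsi ρ u₀ uL < 1 := by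
      rw [sigPsi]
      exact inv_lt_one_of_one_lt₀ h1
    linarith
  have hev : {w | sigG ρ u₀ uL w < 0} ∈ Filter.atTop := hlim (Iio_mem_nhds hneg)
  obtain ⟨b, hb1, hb2⟩ := ((Filter.eventually_gt_atTop u₀).and hev).exists
  have hiv := intermediate_value_Ioo' (le_of_lt hb1) (sigG_cont ρ u₀ uL).continuousOn
  have h0mem : (0:ℝ) ∈ Set.Ioo (sigG ρ u₀ uL b) (sigG ρ u₀ uL u₀) :=
    ⟨hb2, sigG_pos_at ρ u₀ uL hρ hL⟩
  obtain ⟨w, hwmem, hw0⟩ := hiv h0mem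
  have hA := sigG_strictAntiOn ρ u₀ uL hρ hL
  refine ⟨w, ⟨hwmem.1, (hcond w).2 hw0⟩, ?_⟩
  rintro y ⟨hy1, hy2⟩
  have hy0 : sigG ρ u₀ uL y = 0 := (hcond y).1 hy2
  exact hA.injOn (mem_Ici.2 (le_of_lt (mem_Ioi.1 hy1))) (mem_Ici.2 (le_of_lt hwmem.1)) (by rw [hy0, hw0])
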